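/- Let k be a field, p a positive integer, and R := k[X]/(X^p). Let 0 → A →^f B →^g C → 0 be a short exact sequence of R-modules which are finite-dimensional over k, and write x for the multiplication-by-X endomorphism of each module (so x^p = 0). Since any R-module map sends ker x into ker x and range x^j into range x^j, for each 1 ≤ i ≤ p−1 the maps f and g induce k-linear maps φ_i(f) : φ_i(A,x) → φ_i(B,x) and φ_i(g) : φ_i(B,x) → φ_i(C,x). Then the following are equivalent: (1) φ_i(f) is injective for every 1 ≤ i ≤ p−1; (2) φ_i(g) is surjective for every 1 ≤ i ≤ p−1; (3) for every 1 ≤ i ≤ p−1 the sequence 0 → φ_i(A,x) → φ_i(B,x) → φ_i(C,x) → 0 is a short exact sequence of k-vector spaces; (4) the original sequence splits as a sequence of R-modules, i.e. there exists an R-module map r : B → A with r ∘ f = id_A. -/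

import Mathlib

open LinearMap

/-- The `i`-th component of the semisimplification functor: for a `k`-vector space `V`
with endomorphism `x`, `φ_i(V,x) := (ker x ⊓ range x^(i-1)) ⧸ (ker x ⊓ range x^i)`. -/
abbrev phi {k V : Type*} [Field k] [AddCommGroup V] [Module k V]
    (x : V →ₗ[k] V) (i : ℕ) :=
  ↥(LinearMap.ker x ⊓ LinearMap.range (x ^ (i - 1))) ⧸
    ((LinearMap.ker x ⊓ LinearMap.range (x ^ i)).comap
      (LinearMap.ker x ⊓ LinearMap.range (x ^ (i - 1))).subtype)

section
variable {k : Type*} [Field k] {A B : Type*} [AddCommGroup A] [Module k A]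
  [AddCommGroup B] [Module k B]

lemma comm_pow {xA : A →ₗ[k] A} {xB : B →ₗ[k] B} {f : A →ₗ[k] B}
    (h : f ∘ₗ xA = xB ∘ₗ f) (n : ℕ) : f ∘ₗ (xA ^ n) = (xB ^ n) ∘ₗ f := by
  induction n with
  | zero => simp [Module.End.one_eq_id]
  | succ n ih =>
    rw [pow_succ, pow_succ, Module.End.mul_eq_comp, Module.End.mul_eq_comp,
      ← LinearMap.comp_assoc, ih, LinearMap.comp_assoc, h, ← LinearMap.comp_assoc]

lemma mapsTo_phiSub {xA : A →ₗ[k] A} {xB : B →ₗ[k] B} {f : A →ₗ[k] B}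
    (h : f ∘ₗ xA = xB ∘ₗ f) (i : ℕ) :
    ∀ v ∈ LinearMap.ker xA ⊓ LinearMap.range (xA ^ i),
      f v ∈ LinearMap.ker xB ⊓ LinearMap.range (xB ^ i) := by
  intro v hv
  obtain ⟨hv1, hv2⟩ := Submodule.mem_inf.mp hv
  refine Submodule.mem_inf.mpr ⟨?_, ?_⟩
  · rw [LinearMap.mem_ker] at hv1 ⊢
    have := LinearMap.congr_fun h v
    simp only [LinearMap.comp_apply] at this
    rw [← this, hv1, map_zero]
  · obtain ⟨u, hu⟩ := hv2
    refine ⟨f u, ?_⟩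
    have := LinearMap.congr_fun (comm_pow h i) u
    simp only [LinearMap.comp_apply] at this
    rw [← this, hu]

/-- The `k`-linear map `φ_i(f) : φ_i(A, xA) → φ_i(B, xB)` induced by a map `f`
commuting with the nilpotent endomorphisms. -/
noncomputable def phiMap (xA : A →ₗ[k] A) (xB : B →ₗ[k] B) (f : A →ₗ[k] B)
    (h : f ∘ₗ xA = xB ∘ₗ f) (i : ℕ) : phi xA i →ₗ[k] phi xB i :=
  Submodule.mapQ _ _
    (f.restrict (p := LinearMap.ker xA ⊓ LinearMap.range (xA ^ (i - 1)))
      (q := LinearMap.ker xB ⊓ LinearMap.range (xB ^ (i - 1)))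
      (mapsTo_phiSub h (i - 1)))
    (by
      intro v hv
      simp only [Submodule.mem_comap, LinearMap.restrict_apply] at hv ⊢
      exact mapsTo_phiSub h i v.1 hv)

end

section Split
open Module
variable {k V : Type*} [Field k] [AddCommGroup V] [Module k V]

lemma pow_stab {x : V →ₗ[k] V} {A : Submodule k V} (hA : ∀ a ∈ A, x a ∈ A) :
    ∀ j, ∀ a ∈ A, (x ^ j) a ∈ A := by
  intro j
  induction j with
  | zero => intro a ha; simpa using ha
  | succ j ih =>
    intro a ha
    rw [pow_succ, Module.End.mul_apply]
    exact ih (x a) (hA a ha)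

lemma split_of_pure {p : ℕ} [FiniteDimensional k V] (x : V →ₗ[k] V) (hx : x ^ p = 0) :
    ∀ (n : ℕ) (B₀ A : Submodule k V), finrank k B₀ < n → A ≤ B₀ →
      (∀ a ∈ A, x a ∈ A) → (∀ v ∈ B₀, x v ∈ B₀) →
      (∀ (i : ℕ) (w : V), w ∈ B₀ → (x ^ i) w ∈ A → ∃ a ∈ A, (x ^ i) a = (x ^ i) w) →
      ∃ r : V →ₗ[k] V, (∀ v ∈ B₀, r v ∈ A) ∧ (∀ a ∈ A, r a = a) ∧
        (∀ v ∈ B₀, r (x v) = x (r v)) := by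
  intro n
  induction n with
  | zero => intro B₀ A h; omega
  | succ n ih =>
    intro B₀ A hrank hAB hA hB hpure
    by_cases hBA : B₀ ≤ A
    · obtain ⟨Q, hQ⟩ := Submodule.exists_isCompl A
      refine ⟨A.subtype ∘ₗ A.linearProjOfIsCompl Q hQ, ?_, ?_, ?_⟩
      · intro v _; exact (A.linearProjOfIsCompl Q hQ v).2
      · intro a ha
        exact congrArg (Subtype.val)
          (Submodule.linearProjOfIsCompl_apply_left hQ ⟨a, ha⟩)
      · intro v hv
        have h1 : ∀ w ∈ A, (A.subtype ∘ₗ A.linearProjOfIsCompl Q hQ) w = w := by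
          intro w hw
          exact congrArg (Subtype.val)
            (Submodule.linearProjOfIsCompl_apply_left hQ ⟨w, hw⟩)
        rw [h1 v (hBA hv), h1 (x v) (hA v (hBA hv))]
    · classical
    -- the minimal exponent m with x^m B₀ ⊆ A
    have hPp : ∀ v ∈ B₀, (x ^ p) v ∈ A := by intro v _; rw [hx]; simp
    have hfind : ∃ m, ∀ v ∈ B₀, (x ^ m) v ∈ A := ⟨p, hPp⟩
    set m := Nat.find hfind with hmdef
    have hm : ∀ v ∈ B₀, (x ^ m) v ∈ A := Nat.find_spec hfind
    have hm0 : m ≠ 0 := by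
      intro h
      apply hBA
      intro v hv
      have := hm v hv
      rw [h] at this
      simpa using this
    obtain ⟨m', hm'⟩ : ∃ m', m = m' + 1 := Nat.exists_eq_succ_of_ne_zero hm0
    have hmin : ¬ ∀ v ∈ B₀, (x ^ m') v ∈ A := Nat.find_min hfind (by omega)
    push_neg at hmin
    obtain ⟨b₀, hb₀B, hb₀A⟩ := hmin
    rw [hm'] at hm
    -- adjust b₀ so that x^(m'+1) b = 0
    obtain ⟨a', ha'A, ha'⟩ := hpure (m' + 1) b₀ hb₀B (hm b₀ hb₀B)
    set b := b₀ - a' with hbdef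
    have hbB : b ∈ B₀ := sub_mem hb₀B (hAB ha'A)
    have hbx : (x ^ (m' + 1)) b = 0 := by
      rw [hbdef, map_sub, ha', sub_self]
    have hbA : (x ^ m') b ∉ A := by
      intro h
      apply hb₀A
      have : (x ^ m') b₀ = (x ^ m') b + (x ^ m') a' := by
        rw [hbdef, map_sub]; abel
      rw [this]
      exact A.add_mem h (pow_stab hA m' a' ha'A)
    -- the dual functional
    obtain ⟨lam₀, hlam₀, hlam₀A⟩ :=
      Submodule.exists_dual_map_eq_bot_of_notMem (p := A) hbA inferInstance
    set lam := (lam₀ ((x ^ m') b))⁻¹ • lam₀ with hlamdef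
    have hlamA : ∀ a ∈ A, lam a = 0 := by
      intro a ha
      have : lam₀ a ∈ A.map lam₀ := ⟨a, ha, rfl⟩
      rw [hlam₀A] at this
      simp only [Submodule.mem_bot] at this
      simp [hlamdef, this]
    have hlamb : lam ((x ^ m') b) = 1 := by
      simp [hlamdef, inv_mul_cancel₀ hlam₀]
    -- λ vanishes on x^j v for j ≥ m'+1, v ∈ B₀
    have hlam_hi : ∀ j, m' + 1 ≤ j → ∀ v ∈ B₀, lam ((x ^ j) v) = 0 := by
      intro j hj v hv
      have hj' : j = (j - (m' + 1)) + (m' + 1) := by omega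
      rw [hj', pow_add, Module.End.mul_apply]
      exact hlamA _ (pow_stab hA _ _ (hm v hv))
    have hlamb_hi : ∀ j, m' + 1 ≤ j → lam ((x ^ j) b) = 0 := fun j hj => hlam_hi j hj b hbB
    -- define B' and Rb
    set B' : Submodule k V := B₀ ⊓ ⨅ j : Fin (m' + 1), ker (lam ∘ₗ (x ^ (j : ℕ))) with hB'def
    have hB'mem : ∀ v, v ∈ B' ↔ v ∈ B₀ ∧ ∀ j : Fin (m' + 1), lam ((x ^ (j : ℕ)) v) = 0 := by
      intro v
      simp [hB'def, Submodule.mem_inf, Submodule.mem_iInf, LinearMap.mem_ker]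
    have hB'B : B' ≤ B₀ := inf_le_left
    have hAB' : A ≤ B' := by
      intro a ha
      rw [hB'mem]
      exact ⟨hAB ha, fun j => hlamA _ (pow_stab hA _ _ ha)⟩
    have hB'x : ∀ v ∈ B', x v ∈ B' := by
      intro v hv
      rw [hB'mem] at hv ⊢
      obtain ⟨hv1, hv2⟩ := hv
      refine ⟨hB v hv1, fun j => ?_⟩
      have : (x ^ (j : ℕ)) (x v) = (x ^ ((j : ℕ) + 1)) v := by
        rw [pow_succ, Module.End.mul_apply, ← Module.End.mul_apply, ← pow_succ, pow_succ',
          Module.End.mul_apply]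
      rw [this]
      rcases Nat.lt_or_ge ((j : ℕ) + 1) (m' + 1) with h | h
      · exact hv2 ⟨(j : ℕ) + 1, h⟩
      · exact hlam_hi _ h v hv1
    have hbB' : b ∉ B' := by
      rw [hB'mem]
      rintro ⟨-, h2⟩
      have := h2 ⟨m', by omega⟩
      rw [hlamb] at this
      norm_num at this
    set Rb : Submodule k V :=
      Submodule.span k (Set.range fun j : Fin (m' + 1) => (x ^ (j : ℕ)) b) with hRbdef
    have hRbB : Rb ≤ B₀ := by
      rw [hRbdef, Submodule.span_le]
      rintro - ⟨j, rfl⟩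
      exact pow_stab hB _ _ hbB
    have hRbx : ∀ u ∈ Rb, x u ∈ Rb := by
      intro u hu
      induction hu using Submodule.span_induction with
      | mem w hw =>
        obtain ⟨j, rfl⟩ := hw
        have hxx : x ((x ^ (j : ℕ)) b) = (x ^ ((j : ℕ) + 1)) b := by
          rw [pow_succ', Module.End.mul_apply]
        rw [hxx]
        rcases Nat.lt_or_ge ((j : ℕ) + 1) (m' + 1) with h | h
        · exact Submodule.subset_span ⟨⟨(j : ℕ) + 1, h⟩, rfl⟩
        · have : (j : ℕ) + 1 = m' + 1 := by omega
          rw [this, hbx]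
          exact Rb.zero_mem
      | zero => simpa using Rb.zero_mem
      | add w₁ w₂ _ _ ih1 ih2 => rw [map_add]; exact Rb.add_mem ih1 ih2
      | smul c w _ ihw => rw [map_smul]; exact Rb.smul_mem c ihw
    -- disjointness of B' and Rb
    have hdis : B' ⊓ Rb = ⊥ := by
      rw [eq_bot_iff]
      intro v hv
      obtain ⟨hv1, hv2⟩ := Submodule.mem_inf.mp hv
      rw [hRbdef, Submodule.mem_span_range_iff_exists_fun] at hv2
      obtain ⟨c, hc⟩ := hv2
      have hlamv : ∀ j : Fin (m' + 1), lam ((x ^ (j : ℕ)) v) = 0 := ((hB'mem v).mp hv1).2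
      have key : ∀ (jv : ℕ) (hj : jv < m' + 1), c ⟨jv, hj⟩ = 0 := by
        intro jv
        induction jv using Nat.strong_induction_on with
        | _ jv IH =>
          intro hj
          have hcomp : lam ((x ^ (m' - jv)) v) = c ⟨jv, hj⟩ := by
            rw [← hc, map_sum, map_sum]
            have hterm : ∀ i : Fin (m' + 1),
                lam ((x ^ (m' - jv)) (c i • (x ^ (i : ℕ)) b))
                  = c i * lam ((x ^ ((m' - jv) + (i : ℕ))) b) := by
              intro i
              rw [map_smul, map_smul, ← Module.End.mul_apply, ← pow_add]
              rfl
            rw [Finset.sum_congr rfl (fun i _ => hterm i)]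
            rw [Finset.sum_eq_single ⟨jv, hj⟩]
            · have : m' - jv + jv = m' := by omega
              rw [this, hlamb, mul_one]
            · intro i _ hne
              rcases Nat.lt_or_ge (i : ℕ) jv with h | h
              · rw [IH (i : ℕ) h i.isLt, zero_mul]
              · have hgt : jv < (i : ℕ) := by
                  rcases Nat.lt_or_ge jv (i : ℕ) with h' | h'
                  · exact h'
                  · exfalso; apply hne; apply Fin.ext; simp; omega
                rw [hlamb_hi (m' - jv + (i : ℕ)) (by omega), mul_zero]
            · intro hmem
              exact absurd (Finset.mem_univ _) hmem
          rw [hlamv ⟨m' - jv, by omega⟩] at hcomp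
          exact hcomp.symm
      have : v = 0 := by
        rw [← hc]
        apply Finset.sum_eq_zero
        intro i _
        rw [key (i : ℕ) i.isLt]
        · simp
      simpa using this
    -- B₀ ≤ B' ⊔ Rb
    have haux : ∀ t : ℕ, ∀ v ∈ B₀,
        (∀ j, t ≤ j → j < m' + 1 → lam ((x ^ j) v) = 0) → v ∈ B' ⊔ Rb := by
      intro t
      induction t with
      | zero =>
        intro v hv hcond
        apply Submodule.mem_sup_left
        rw [hB'mem]
        exact ⟨hv, fun j => hcond (j : ℕ) (Nat.zero_le _) j.isLt⟩
      | succ t iht =>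
        intro v hv hcond
        rcases Nat.lt_or_ge t (m' + 1) with ht | ht
        · set v₂ := v - lam ((x ^ t) v) • (x ^ (m' - t)) b with hv₂def
          have hv₂B : v₂ ∈ B₀ := sub_mem hv (B₀.smul_mem _ (pow_stab hB _ _ hbB))
          have hv₂cond : ∀ j, t ≤ j → j < m' + 1 → lam ((x ^ j) v₂) = 0 := by
            intro j hj hj'
            rw [hv₂def, map_sub, map_sub, map_smul, map_smul, ← Module.End.mul_apply,
              ← pow_add]
            rcases Nat.lt_or_ge t j with h | h
            · rw [hcond j h hj', hlamb_hi (j + (m' - t)) (by omega)]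
              simp
            · have hjt : j = t := by omega
              subst hjt
              have : j + (m' - j) = m' := by omega
              rw [this, hlamb]
              simp
          have hv₂sup := iht v₂ hv₂B hv₂cond
          have : v = v₂ + lam ((x ^ t) v) • (x ^ (m' - t)) b := by
            rw [hv₂def]; abel
          rw [this]
          refine Submodule.add_mem _ hv₂sup (Submodule.mem_sup_right ?_)
          exact Rb.smul_mem _ (Submodule.subset_span ⟨⟨m' - t, by omega⟩, rfl⟩)
        · exact iht v hv (fun j hj hj' => absurd hj' (by omega))
    have hsup : ∀ v ∈ B₀, v ∈ B' ⊔ Rb :=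
      fun v hv => haux (m' + 1) v hv (fun j hj hj' => absurd hj' (by omega))
    -- the complement Q of B' containing Rb
    obtain ⟨Z, hZ⟩ := Submodule.exists_isCompl (B' ⊔ Rb)
    set Q := Rb ⊔ Z with hQdef
    have hcompl : IsCompl B' Q := by
      constructor
      · rw [disjoint_iff]
        rw [eq_bot_iff]
        intro v hv
        obtain ⟨hv1, hv2⟩ := Submodule.mem_inf.mp hv
        obtain ⟨u, hu, z, hz, rfl⟩ := Submodule.mem_sup.mp hv2
        have hzmem : z ∈ (B' ⊔ Rb) ⊓ Z := by
          refine Submodule.mem_inf.mpr ⟨?_, hz⟩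
          have : z = (u + z) - u := by abel
          rw [this]
          exact Submodule.sub_mem _ (Submodule.mem_sup_left hv1) (Submodule.mem_sup_right hu)
        have hz0 : z = 0 := by
          have := hZ.disjoint
          rw [disjoint_iff, eq_bot_iff] at this
          simpa using this hzmem
        subst hz0
        rw [add_zero] at hv1 ⊢
        have : u ∈ B' ⊓ Rb := Submodule.mem_inf.mpr ⟨hv1, hu⟩
        rw [hdis] at this
        simpa using this
      · rw [codisjoint_iff]
        rw [hQdef, ← sup_assoc]
        rw [← codisjoint_iff]
        exact hZ.codisjoint
    have hRbQ : Rb ≤ Q := le_sup_left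
    -- the projection and induction
    have hrank' : finrank k B' < n := by
      have hlt : B' < B₀ := lt_of_le_of_ne hB'B (by
        intro h
        exact hbB' (h ▸ hbB))
      have := Submodule.finrank_lt_finrank_of_lt (s := B') (t := B₀) hlt
      omega
    obtain ⟨r', hr'1, hr'2, hr'3⟩ := ih B' A hrank' hAB' hA hB'x
      (fun i w hw hiw => hpure i w (hB'B hw) hiw)
    set π := B'.projectionOnto Q hcompl with hπdef
    refine ⟨r' ∘ₗ B'.subtype ∘ₗ π, ?_, ?_, ?_⟩
    · intro v hv
      obtain ⟨v', hv', u, hu, rfl⟩ := Submodule.mem_sup.mp (hsup v hv)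
      have : π (v' + u) = ⟨v', hv'⟩ := by
        rw [map_add, Submodule.linearProjOfIsCompl_apply_left hcompl ⟨v', hv'⟩,
          Submodule.linearProjOfIsCompl_apply_right' hcompl (hRbQ hu), add_zero]
      simp only [LinearMap.comp_apply, this]
      exact hr'1 v' hv'
    · intro a ha
      have : π a = ⟨a, hAB' ha⟩ :=
        Submodule.linearProjOfIsCompl_apply_left hcompl ⟨a, hAB' ha⟩
      simp only [LinearMap.comp_apply, this]
      exact hr'2 a ha
    · intro v hv
      obtain ⟨v', hv', u, hu, rfl⟩ := Submodule.mem_sup.mp (hsup v hv)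
      have h1 : π (v' + u) = ⟨v', hv'⟩ := by
        rw [map_add, Submodule.linearProjOfIsCompl_apply_left hcompl ⟨v', hv'⟩,
          Submodule.linearProjOfIsCompl_apply_right' hcompl (hRbQ hu), add_zero]
      have h2 : π (x (v' + u)) = ⟨x v', hB'x v' hv'⟩ := by
        rw [map_add, map_add, Submodule.linearProjOfIsCompl_apply_left hcompl ⟨x v', hB'x v' hv'⟩,
          Submodule.linearProjOfIsCompl_apply_right' hcompl (hRbQ (hRbx u hu)), add_zero]
      simp only [LinearMap.comp_apply, h1, h2]
      exact hr'3 v' hv'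


end Split

section PureAux
variable {k : Type*} [Field k] {A B C : Type*} [AddCommGroup A] [Module k A]
  [AddCommGroup B] [Module k B] [AddCommGroup C] [Module k C]

lemma comm_pow_apply {xA : A →ₗ[k] A} {xB : B →ₗ[k] B} {f : A →ₗ[k] B}
    (h : f ∘ₗ xA = xB ∘ₗ f) (n : ℕ) (a : A) : f ((xA ^ n) a) = (xB ^ n) (f a) := by
  have := LinearMap.congr_fun (comm_pow h n) a
  simpa using this

lemma pow_eq_zero_of_ge {x : A →ₗ[k] A} {p : ℕ} (hx : x ^ p = 0) {j : ℕ} (hj : p ≤ j) :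
    x ^ j = 0 := by
  have : x ^ j = x ^ p * x ^ (j - p) := by rw [← pow_add]; congr 1; omega
  rw [this, hx, zero_mul]

lemma comm_comp {xA : A →ₗ[k] A} {xB : B →ₗ[k] B} {xC : C →ₗ[k] C}
    {f : A →ₗ[k] B} {g : B →ₗ[k] C}
    (hf : f ∘ₗ xA = xB ∘ₗ f) (hg : g ∘ₗ xB = xC ∘ₗ g) :
    (g ∘ₗ f) ∘ₗ xA = xC ∘ₗ (g ∘ₗ f) := by
  apply LinearMap.ext
  intro a
  have h1 := LinearMap.congr_fun hf a
  have h2 := LinearMap.congr_fun hg (f a)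
  simp only [LinearMap.comp_apply] at h1 h2 ⊢
  rw [h1, h2]

/-- Condition (1) (all φᵢ(f) injective) implies purity of `range f` in `B`. -/
lemma pure_of_phi_inj {p : ℕ} (hp : 0 < p)
    (xA : A →ₗ[k] A) (xB : B →ₗ[k] B) (hxB : xB ^ p = 0)
    (f : A →ₗ[k] B) (hfx : f ∘ₗ xA = xB ∘ₗ f) (hfinj : Function.Injective f)
    (Hinj : ∀ i, 1 ≤ i → ∀ v ∈ LinearMap.ker xA ⊓ LinearMap.range (xA ^ (i - 1)),
      f v ∈ LinearMap.range (xB ^ i) → v ∈ LinearMap.range (xA ^ i)) :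
    ∀ (i : ℕ) (w : B), (xB ^ i) w ∈ LinearMap.range f →
      ∃ a ∈ LinearMap.range f, (xB ^ i) a = (xB ^ i) w := by
  -- Lemma A: ker xB ∩ range f ∩ range xB^i ⊆ f (range xA^i)
  have lemA : ∀ i : ℕ, ∀ z : B, xB z = 0 → z ∈ LinearMap.range f →
      z ∈ LinearMap.range (xB ^ i) → ∃ a : A, z = f ((xA ^ i) a) := by
    intro i
    induction i with
    | zero =>
      intro z _ hz2 _
      obtain ⟨a, rfl⟩ := hz2
      exact ⟨a, by simp⟩
    | succ i ih =>
      intro z hz1 hz2 hz3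
      have hz3' : z ∈ LinearMap.range (xB ^ i) := by
        obtain ⟨w, rfl⟩ := hz3
        exact ⟨xB w, by rw [← Module.End.mul_apply, ← pow_succ]⟩
      obtain ⟨a, hza⟩ := ih z hz1 hz2 hz3'
      set v := (xA ^ i) a with hvdef
      have hv1 : v ∈ LinearMap.ker xA := by
        rw [LinearMap.mem_ker]
        apply hfinj
        have : f (xA v) = xB (f v) := by
          have := LinearMap.congr_fun hfx v; simpa using this
        rw [this, ← hza, hz1, map_zero]
      have hv2 : v ∈ LinearMap.range (xA ^ i) := ⟨a, rfl⟩
      have hfv : f v ∈ LinearMap.range (xB ^ (i + 1)) := by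
        rw [← hza]
        exact hz3
      have := Hinj (i + 1) (by omega) v
        (Submodule.mem_inf.mpr ⟨hv1, by simpa using hv2⟩) (by simpa using hfv)
      obtain ⟨a', ha'⟩ := this
      exact ⟨a', by rw [hza, ← ha']⟩
  -- downward induction to get purity
  have main : ∀ d : ℕ, ∀ i : ℕ, p ≤ i + d → ∀ w : B, (xB ^ i) w ∈ LinearMap.range f →
      ∃ a ∈ LinearMap.range f, (xB ^ i) a = (xB ^ i) w := by
    intro d
    induction d with
    | zero =>
      intro i hi w _
      refine ⟨0, Submodule.zero_mem _, ?_⟩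
      rw [pow_eq_zero_of_ge hxB (by omega : p ≤ i)]
      simp
    | succ d ihd =>
      intro i hi w hw
      obtain ⟨a₀, ha₀⟩ := hw
      have hxw : (xB ^ (i + 1)) w ∈ LinearMap.range f := by
        refine ⟨xA a₀, ?_⟩
        have h1 : f (xA a₀) = xB (f a₀) := by
          have := LinearMap.congr_fun hfx a₀; simpa using this
        rw [h1, ha₀, ← Module.End.mul_apply, ← pow_succ']
      obtain ⟨v', hv'f, hv'⟩ := ihd (i + 1) (by omega) w hxw
      set z := (xB ^ i) w - (xB ^ i) v' with hzdef
      have hz1 : xB z = 0 := by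
        rw [hzdef, map_sub, ← Module.End.mul_apply, ← Module.End.mul_apply, ← pow_succ',
          hv', sub_self]
      have hz2 : z ∈ LinearMap.range f := by
        obtain ⟨a₁, ha₁⟩ := hv'f
        refine Submodule.sub_mem _ ⟨a₀, ha₀⟩ ⟨(xA ^ i) a₁, ?_⟩
        rw [comm_pow_apply hfx i a₁, ha₁]
      have hz3 : z ∈ LinearMap.range (xB ^ i) := by
        exact Submodule.sub_mem _ ⟨w, rfl⟩ ⟨v', rfl⟩
      obtain ⟨a₂, ha₂⟩ := lemA i z hz1 hz2 hz3
      refine ⟨f a₂ + v', Submodule.add_mem _ ⟨a₂, rfl⟩ hv'f, ?_⟩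
      rw [map_add]
      have : (xB ^ i) (f a₂) = z := by
        rw [← comm_pow_apply hfx i a₂, ← ha₂]
      rw [this, hzdef]
      abel
  intro i w hw
  exact main p i (by omega) w hw

end PureAux

section Pure2
variable {k : Type*} [Field k] {B C : Type*}
  [AddCommGroup B] [Module k B] [AddCommGroup C] [Module k C]

/-- Condition (2) (all φᵢ(g) surjective) gives lifts preserving order and range depth. -/
lemma lift_of_phi_surj {p : ℕ} (hp : 0 < p)
    (xB : B →ₗ[k] B) (xC : C →ₗ[k] C) (hxB : xB ^ p = 0) (hxC : xC ^ p = 0)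
    (g : B →ₗ[k] C) (hgx : g ∘ₗ xB = xC ∘ₗ g)
    (Hsur : ∀ i, 1 ≤ i → ∀ c ∈ LinearMap.ker xC ⊓ LinearMap.range (xC ^ (i - 1)),
      ∃ u, u ∈ LinearMap.ker xB ⊓ LinearMap.range (xB ^ (i - 1)) ∧
        g u - c ∈ LinearMap.ker xC ⊓ LinearMap.range (xC ^ i)) :
    ∀ (N j s : ℕ) (c : C), j + (p - s) ≤ N → c ∈ LinearMap.range (xC ^ s) →
      (xC ^ j) c = 0 →
      ∃ b, b ∈ LinearMap.range (xB ^ s) ∧ g b = c ∧ (xB ^ j) b = 0 := by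
  intro N
  induction N with
  | zero =>
    intro j s c hN hcs hcj
    have hj : j = 0 := by omega
    subst hj
    simp only [pow_zero, Module.End.one_apply] at hcj
    subst hcj
    exact ⟨0, Submodule.zero_mem _, map_zero g, map_zero _⟩
  | succ N ihN =>
    intro j s c hN hcs hcj
    rcases Nat.eq_zero_or_pos j with hj | hj
    · subst hj
      simp only [pow_zero, Module.End.one_apply] at hcj
      subst hcj
      exact ⟨0, Submodule.zero_mem _, map_zero g, map_zero _⟩
    rcases Nat.lt_or_ge s p with hs | hs
    · -- main case : 1 ≤ j, s < p
      obtain ⟨j', rfl⟩ : ∃ j', j = j' + 1 := ⟨j - 1, by omega⟩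
      obtain ⟨d, hd⟩ := hcs
      -- c₀ = xC^j' c ∈ ker xC ⊓ range xC^(s+j')
      have hc₀ker : xC ((xC ^ j') c) = 0 := by
        rw [← Module.End.mul_apply, ← pow_succ', hcj]
      have hc₀rng : (xC ^ j') c ∈ LinearMap.range (xC ^ (s + j')) := by
        refine ⟨d, ?_⟩
        rw [← hd, ← Module.End.mul_apply, ← pow_add, Nat.add_comm j' s]
      obtain ⟨u, hu, he⟩ := Hsur (s + j' + 1) (by omega) ((xC ^ j') c)
        (Submodule.mem_inf.mpr ⟨hc₀ker, by simpa using hc₀rng⟩)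
      obtain ⟨huker, hurng⟩ := Submodule.mem_inf.mp hu
      simp only [Nat.add_sub_cancel] at hurng
      obtain ⟨w₀, hw₀⟩ := hurng
      obtain ⟨w, hwdef⟩ : ∃ w, w = (xB ^ s) w₀ := ⟨_, rfl⟩
      have huw : u = (xB ^ j') w := by
        rw [hwdef, ← Module.End.mul_apply, ← pow_add, Nat.add_comm j' s, hw₀]
      obtain ⟨heker, hernng⟩ := Submodule.mem_inf.mp he
      obtain ⟨d₁, hd₁⟩ := hernng
      -- c₂ := c - g w + xC^(s+1) d₁ satisfies xC^j' c₂ = 0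
      set e₁ := (xC ^ (s + 1)) d₁ with he₁def
      set c₂ := c - g w + e₁ with hc₂def
      have hgw : (xC ^ j') (g w) = g u := by rw [huw, comm_pow_apply hgx]
      have he₁j' : (xC ^ j') e₁ = g u - (xC ^ j') c := by
        rw [he₁def, ← Module.End.mul_apply, ← pow_add]
        have : j' + (s + 1) = s + j' + 1 := by omega
        rw [this, hd₁]
      have hc₂j' : (xC ^ j') c₂ = 0 := by
        rw [hc₂def, map_add, map_sub, hgw, he₁j']
        abel
      have hc₂rng : c₂ ∈ LinearMap.range (xC ^ s) := by
        refine Submodule.add_mem _ (Submodule.sub_mem _ ⟨d, hd⟩ ?_) ?_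
        · exact ⟨g w₀, by rw [hwdef, comm_pow_apply hgx]⟩
        · exact ⟨xC d₁, by rw [he₁def, ← Module.End.mul_apply, ← pow_succ]⟩
      obtain ⟨b₂, hb₂rng, hb₂g, hb₂j⟩ := ihN j' s c₂ (by omega) hc₂rng hc₂j'
      -- lift e₁ with j'+1, s+1
      have he₁rng : e₁ ∈ LinearMap.range (xC ^ (s + 1)) := ⟨d₁, he₁def.symm⟩
      have he₁j : (xC ^ (j' + 1)) e₁ = 0 := by
        rw [he₁def, ← Module.End.mul_apply, ← pow_add]
        have h1 : j' + 1 + (s + 1) = (s + j' + 1) + 1 := by omega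
        rw [h1, pow_succ', Module.End.mul_apply, hd₁]
        exact heker
      obtain ⟨b₃, hb₃rng, hb₃g, hb₃j⟩ := ihN (j' + 1) (s + 1) e₁ (by omega) he₁rng he₁j
      have hb₃rng' : b₃ ∈ LinearMap.range (xB ^ s) := by
        obtain ⟨y, hy⟩ := hb₃rng
        exact ⟨xB y, by rw [← hy, ← Module.End.mul_apply, ← pow_succ]⟩
      refine ⟨w + b₂ - b₃, ?_, ?_, ?_⟩
      · exact Submodule.sub_mem _ (Submodule.add_mem _ ⟨w₀, hwdef.symm⟩ hb₂rng) hb₃rng'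
      · rw [map_sub, map_add, hb₂g, hb₃g, hc₂def]
        abel
      · rw [map_sub, map_add]
        have h1 : (xB ^ (j' + 1)) w = 0 := by
          rw [pow_succ', Module.End.mul_apply, ← huw]
          exact huker
        have h2 : (xB ^ (j' + 1)) b₂ = 0 := by
          rw [pow_succ', Module.End.mul_apply, hb₂j, map_zero]
        rw [h1, h2, hb₃j]
        abel
    · -- s ≥ p : c = 0
      have : c = 0 := by
        obtain ⟨d, hd⟩ := hcs
        rw [← hd, pow_eq_zero_of_ge hxC hs]
        rfl
      subst this
      exact ⟨0, Submodule.zero_mem _, map_zero g, map_zero _⟩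

/-- Condition (2) implies purity of `ker g` in `B`. -/
lemma pure_of_phi_surj {p : ℕ} (hp : 0 < p)
    (xB : B →ₗ[k] B) (xC : C →ₗ[k] C) (hxB : xB ^ p = 0) (hxC : xC ^ p = 0)
    (g : B →ₗ[k] C) (hgx : g ∘ₗ xB = xC ∘ₗ g)
    (Hsur : ∀ i, 1 ≤ i → ∀ c ∈ LinearMap.ker xC ⊓ LinearMap.range (xC ^ (i - 1)),
      ∃ u, u ∈ LinearMap.ker xB ⊓ LinearMap.range (xB ^ (i - 1)) ∧
        g u - c ∈ LinearMap.ker xC ⊓ LinearMap.range (xC ^ i)) :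
    ∀ (i : ℕ) (w : B), (xB ^ i) w ∈ LinearMap.ker g →
      ∃ b ∈ LinearMap.ker g, (xB ^ i) b = (xB ^ i) w := by
  intro i w hw
  have hc : (xC ^ i) (g w) = 0 := by
    rw [← comm_pow_apply hgx i w]
    exact hw
  have hcs : g w ∈ LinearMap.range (xC ^ 0) := ⟨g w, rfl⟩
  obtain ⟨b, _, hbg, hbj⟩ := lift_of_phi_surj hp xB xC hxB hxC g hgx Hsur
    (i + p) i 0 (g w) (by omega) hcs hc
  refine ⟨w - b, ?_, ?_⟩
  · rw [LinearMap.mem_ker, map_sub, hbg, sub_self]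
  · rw [map_sub, hbj, sub_zero]

end Pure2

section PhiUtil
variable {k : Type*} [Field k] {A B C : Type*} [AddCommGroup A] [Module k A]
  [AddCommGroup B] [Module k B] [AddCommGroup C] [Module k C]

lemma phiMap_mk {xA : A →ₗ[k] A} {xB : B →ₗ[k] B} {f : A →ₗ[k] B}
    (h : f ∘ₗ xA = xB ∘ₗ f) (i : ℕ) (v : A)
    (hv : v ∈ LinearMap.ker xA ⊓ LinearMap.range (xA ^ (i - 1))) :
    phiMap xA xB f h i (Submodule.Quotient.mk ⟨v, hv⟩) =
      Submodule.Quotient.mk ⟨f v, mapsTo_phiSub h (i - 1) v hv⟩ := by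
  rw [phiMap, Submodule.mapQ_apply]
  rfl

lemma phiMap_congr {xA : A →ₗ[k] A} {xB : B →ₗ[k] B} {f₁ f₂ : A →ₗ[k] B}
    (h₁ : f₁ ∘ₗ xA = xB ∘ₗ f₁) (h₂ : f₂ ∘ₗ xA = xB ∘ₗ f₂) (e : f₁ = f₂) (i : ℕ) :
    phiMap xA xB f₁ h₁ i = phiMap xA xB f₂ h₂ i := by
  subst e; rfl

lemma phiMap_id {xA : A →ₗ[k] A} (h : LinearMap.id ∘ₗ xA = xA ∘ₗ LinearMap.id) (i : ℕ) :
    phiMap xA xA LinearMap.id h i = LinearMap.id := by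
  apply LinearMap.ext
  intro y
  obtain ⟨⟨v, hv⟩, rfl⟩ := Submodule.Quotient.mk_surjective _ y
  rw [phiMap_mk]
  rfl

lemma phiMap_comp {xA : A →ₗ[k] A} {xB : B →ₗ[k] B} {xC : C →ₗ[k] C}
    {f : A →ₗ[k] B} {g : B →ₗ[k] C}
    (hf : f ∘ₗ xA = xB ∘ₗ f) (hg : g ∘ₗ xB = xC ∘ₗ g)
    (hgf : (g ∘ₗ f) ∘ₗ xA = xC ∘ₗ (g ∘ₗ f)) (i : ℕ) :
    phiMap xA xC (g ∘ₗ f) hgf i = phiMap xB xC g hg i ∘ₗ phiMap xA xB f hf i := by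
  apply LinearMap.ext
  intro y
  obtain ⟨⟨v, hv⟩, rfl⟩ := Submodule.Quotient.mk_surjective _ y
  rw [LinearMap.comp_apply, phiMap_mk, phiMap_mk, phiMap_mk]
  rfl

lemma phiMap_add {xA : A →ₗ[k] A} {xB : B →ₗ[k] B} {f₁ f₂ : A →ₗ[k] B}
    (h₁ : f₁ ∘ₗ xA = xB ∘ₗ f₁) (h₂ : f₂ ∘ₗ xA = xB ∘ₗ f₂)
    (h : (f₁ + f₂) ∘ₗ xA = xB ∘ₗ (f₁ + f₂)) (i : ℕ) :
    phiMap xA xB (f₁ + f₂) h i = phiMap xA xB f₁ h₁ i + phiMap xA xB f₂ h₂ i := by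
  apply LinearMap.ext
  intro y
  obtain ⟨⟨v, hv⟩, rfl⟩ := Submodule.Quotient.mk_surjective _ y
  rw [LinearMap.add_apply, phiMap_mk, phiMap_mk, phiMap_mk, ← Submodule.Quotient.mk_add]
  rfl

lemma phiMap_inj_concrete {xA : A →ₗ[k] A} {xB : B →ₗ[k] B} {f : A →ₗ[k] B}
    (h : f ∘ₗ xA = xB ∘ₗ f) (i : ℕ)
    (hinj : Function.Injective (phiMap xA xB f h i)) :
    ∀ v, v ∈ LinearMap.ker xA ⊓ LinearMap.range (xA ^ (i - 1)) →
      f v ∈ LinearMap.ker xB ⊓ LinearMap.range (xB ^ i) →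
      v ∈ LinearMap.ker xA ⊓ LinearMap.range (xA ^ i) := by
  intro v hv hfv
  have h0 : phiMap xA xB f h i (Submodule.Quotient.mk ⟨v, hv⟩) = 0 := by
    rw [phiMap_mk, Submodule.Quotient.mk_eq_zero]
    simpa using hfv
  have := hinj (h0.trans (map_zero _).symm)
  rw [Submodule.Quotient.mk_eq_zero] at this
  simpa using this

lemma phiMap_surj_concrete {xB : B →ₗ[k] B} {xC : C →ₗ[k] C} {g : B →ₗ[k] C}
    (h : g ∘ₗ xB = xC ∘ₗ g) (i : ℕ)
    (hsurj : Function.Surjective (phiMap xB xC g h i)) :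
    ∀ c, c ∈ LinearMap.ker xC ⊓ LinearMap.range (xC ^ (i - 1)) →
      ∃ u, u ∈ LinearMap.ker xB ⊓ LinearMap.range (xB ^ (i - 1)) ∧
        g u - c ∈ LinearMap.ker xC ⊓ LinearMap.range (xC ^ i) := by
  intro c hc
  obtain ⟨y, hy⟩ := hsurj (Submodule.Quotient.mk ⟨c, hc⟩)
  obtain ⟨⟨u, hu⟩, rfl⟩ := Submodule.Quotient.mk_surjective _ y
  rw [phiMap_mk] at hy
  refine ⟨u, hu, ?_⟩
  rw [Submodule.Quotient.eq] at hy
  simpa using hy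


lemma phiMap_zero {xA : A →ₗ[k] A} {xB : B →ₗ[k] B}
    (h : (0 : A →ₗ[k] B) ∘ₗ xA = xB ∘ₗ (0 : A →ₗ[k] B)) (i : ℕ) :
    phiMap xA xB 0 h i = 0 := by
  apply LinearMap.ext
  intro y
  obtain ⟨⟨v, hv⟩, rfl⟩ := Submodule.Quotient.mk_surjective _ y
  rw [phiMap_mk]
  simp only [LinearMap.zero_apply]
  rw [Submodule.Quotient.mk_eq_zero]
  simp

end PhiUtil


/-- for a short exact sequence `0 → A → B → C → 0` of finite-dimensional
modules over `R = k[X]/(X^p)` (presented as vector spaces with commuting nilpotent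
endomorphisms), the following are equivalent: (1) all `φ_i(f)` are injective;
(2) all `φ_i(g)` are surjective; (3) all sequences `0 → φ_i(A) → φ_i(B) → φ_i(C) → 0`
are exact; (4) the original sequence splits as `R`-modules. -/
theorem stmt1 {k : Type*} [Field k] {A B C : Type*}
    [AddCommGroup A] [Module k A] [AddCommGroup B] [Module k B]
    [AddCommGroup C] [Module k C]
    [FiniteDimensional k A] [FiniteDimensional k B] [FiniteDimensional k C]
    (p : ℕ) (hp : 0 < p)
    (xA : A →ₗ[k] A) (xB : B →ₗ[k] B) (xC : C →ₗ[k] C)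
    (hxA : xA ^ p = 0) (hxB : xB ^ p = 0) (hxC : xC ^ p = 0)
    (f : A →ₗ[k] B) (g : B →ₗ[k] C)
    (hfx : f ∘ₗ xA = xB ∘ₗ f) (hgx : g ∘ₗ xB = xC ∘ₗ g)
    (hfinj : Function.Injective f) (hgsurj : Function.Surjective g)
    (hexact : LinearMap.range f = LinearMap.ker g) :
    List.TFAE
      [ ∀ i, 1 ≤ i → i ≤ p - 1 → Function.Injective (phiMap xA xB f hfx i),
        ∀ i, 1 ≤ i → i ≤ p - 1 → Function.Surjective (phiMap xB xC g hgx i),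
        ∀ i, 1 ≤ i → i ≤ p - 1 →
          Function.Injective (phiMap xA xB f hfx i) ∧
          Function.Surjective (phiMap xB xC g hgx i) ∧
          LinearMap.range (phiMap xA xB f hfx i) =
            LinearMap.ker (phiMap xB xC g hgx i),
        ∃ rr : B →ₗ[k] A, rr ∘ₗ xB = xA ∘ₗ rr ∧ rr ∘ₗ f = LinearMap.id ] := by
  classical
  have hfx_pt : ∀ a, f (xA a) = xB (f a) := fun a => by
    have := LinearMap.congr_fun hfx a; simpa using this
  have hgx_pt : ∀ b, g (xB b) = xC (g b) := fun b => by
    have := LinearMap.congr_fun hgx b; simpa using this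
  have hgf : g ∘ₗ f = 0 := by
    apply LinearMap.ext
    intro a
    have : f a ∈ LinearMap.ker g := hexact ▸ LinearMap.mem_range_self f a
    simpa using this
  -- purity of range f gives a splitting
  have split_main : (∀ (i : ℕ) (w : B), (xB ^ i) w ∈ LinearMap.range f →
      ∃ a ∈ LinearMap.range f, (xB ^ i) a = (xB ^ i) w) →
      ∃ rr : B →ₗ[k] A, rr ∘ₗ xB = xA ∘ₗ rr ∧ rr ∘ₗ f = LinearMap.id := by
    intro hpure
    obtain ⟨r, hr1, hr2, hr3⟩ := split_of_pure (p := p) xB hxB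
      (Module.finrank k (⊤ : Submodule k B) + 1) ⊤ (LinearMap.range f)
      (by omega) le_top
      (by rintro a ⟨a₀, rfl⟩; exact ⟨xA a₀, hfx_pt a₀⟩)
      (fun v _ => Submodule.mem_top)
      (fun i w _ hw => hpure i w hw)
    set e := LinearEquiv.ofInjective f hfinj with hedef
    have hmem : ∀ w : B, r w ∈ LinearMap.range f := fun w => hr1 w Submodule.mem_top
    set rr : B →ₗ[k] A :=
      e.symm.toLinearMap ∘ₗ LinearMap.codRestrict _ r hmem with hrrdef
    have hfrr : ∀ w, f (rr w) = r w := by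
      intro w
      have h1 : (e (rr w) : B) = f (rr w) := LinearEquiv.ofInjective_apply f (rr w)
      have h2 : e (rr w) = ⟨r w, hmem w⟩ := by
        rw [hrrdef]
        simp only [LinearMap.comp_apply, LinearEquiv.coe_coe]
        exact e.apply_symm_apply _
      rw [← h1, h2]
    refine ⟨rr, ?_, ?_⟩
    · apply LinearMap.ext
      intro w
      apply hfinj
      simp only [LinearMap.comp_apply]
      rw [hfrr, hr3 w Submodule.mem_top, hfx_pt, hfrr]
    · apply LinearMap.ext
      intro a
      apply hfinj
      simp only [LinearMap.comp_apply, LinearMap.id_apply]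
      rw [hfrr, hr2 (f a) ⟨a, rfl⟩]
  tfae_have 3 → 1 := fun h i h1 h2 => (h i h1 h2).1
  tfae_have 3 → 2 := fun h i h1 h2 => (h i h1 h2).2.1
  tfae_have 1 → 4 := by
    intro h1
    apply split_main
    have Hinj : ∀ i, 1 ≤ i →
        ∀ v ∈ LinearMap.ker xA ⊓ LinearMap.range (xA ^ (i - 1)),
        f v ∈ LinearMap.range (xB ^ i) → v ∈ LinearMap.range (xA ^ i) := by
      intro i hi v hv hfv
      rcases Nat.lt_or_ge i p with hip | hip
      · have hle : i ≤ p - 1 := by omega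
        have hker : f v ∈ LinearMap.ker xB := by
          rw [LinearMap.mem_ker, ← hfx_pt]
          have : xA v = 0 := (Submodule.mem_inf.mp hv).1
          rw [this, map_zero]
        have := phiMap_inj_concrete hfx i (h1 i hi hle) v hv
          (Submodule.mem_inf.mpr ⟨hker, hfv⟩)
        exact (Submodule.mem_inf.mp this).2
      · -- i ≥ p : f v = 0 hence v = 0
        obtain ⟨y, hy⟩ := hfv
        rw [pow_eq_zero_of_ge hxB hip] at hy
        have hv0 : v = 0 := by
          apply hfinj
          rw [← hy, map_zero]
          rfl
        rw [hv0]
        exact Submodule.zero_mem _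
    exact pure_of_phi_inj hp xA xB hxB f hfx hfinj Hinj
  tfae_have 2 → 4 := by
    intro h2
    apply split_main
    have Hsur : ∀ i, 1 ≤ i →
        ∀ c ∈ LinearMap.ker xC ⊓ LinearMap.range (xC ^ (i - 1)),
        ∃ u, u ∈ LinearMap.ker xB ⊓ LinearMap.range (xB ^ (i - 1)) ∧
          g u - c ∈ LinearMap.ker xC ⊓ LinearMap.range (xC ^ i) := by
      intro i hi c hc
      rcases Nat.lt_or_ge i p with hip | hip
      · exact phiMap_surj_concrete hgx i (h2 i hi (by omega)) c hc
      · rcases Nat.eq_or_lt_of_le hip with hip' | hip'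
        · -- i = p
          obtain ⟨hcker, hcrng⟩ := Submodule.mem_inf.mp hc
          obtain ⟨d, hd⟩ := hcrng
          obtain ⟨b, hb⟩ := hgsurj d
          refine ⟨(xB ^ (i - 1)) b, Submodule.mem_inf.mpr ⟨?_, ⟨b, rfl⟩⟩, ?_⟩
          · rw [LinearMap.mem_ker, ← Module.End.mul_apply, ← pow_succ']
            have hii : i - 1 + 1 = i := by omega
            rw [hii, pow_eq_zero_of_ge hxB hip]
            rfl
          · have : g ((xB ^ (i - 1)) b) = c := by
              rw [comm_pow_apply hgx, hb, hd]
            rw [this, sub_self]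
            exact Submodule.zero_mem _
        · -- i > p : c = 0
          have hc0 : c = 0 := by
            obtain ⟨hcker, hcrng⟩ := Submodule.mem_inf.mp hc
            obtain ⟨d, hd⟩ := hcrng
            rw [← hd, pow_eq_zero_of_ge hxC (by omega : p ≤ i - 1)]
            rfl
          subst hc0
          refine ⟨0, Submodule.mem_inf.mpr ⟨by simp, Submodule.zero_mem _⟩, ?_⟩
          simpa using Submodule.zero_mem _
    have hpure := pure_of_phi_surj hp xB xC hxB hxC g hgx Hsur
    intro i w hw
    have hw' : (xB ^ i) w ∈ LinearMap.ker g := hexact ▸ hw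
    obtain ⟨b, hbker, hb⟩ := hpure i w hw'
    rw [← hexact] at hbker
    exact ⟨b, hbker, hb⟩
  tfae_have 4 → 3 := by
    rintro ⟨rr, hrrx, hrrf⟩ i hi1 hi2
    have hrr_pt : ∀ b, rr (xB b) = xA (rr b) := fun b => by
      have := LinearMap.congr_fun hrrx b; simpa using this
    -- the section s of g
    obtain ⟨σ, hσ⟩ := g.exists_rightInverse_of_surjective
      (LinearMap.range_eq_top.mpr hgsurj)
    set q := (LinearMap.id : B →ₗ[k] B) - f ∘ₗ rr with hqdef
    have hq_pt : ∀ b, q b = b - f (rr b) := fun b => rfl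
    have hqker : ∀ v ∈ LinearMap.ker g, q v = 0 := by
      intro v hv
      rw [← hexact] at hv
      obtain ⟨a, rfl⟩ := hv
      have hra : rr (f a) = a := by
        have := LinearMap.congr_fun hrrf a; simpa using this
      rw [hq_pt, hra, sub_self]
    set s := q ∘ₗ σ with hsdef
    have hsg : ∀ b, s (g b) = q b := by
      intro b
      have h1 : g (σ (g b) - b) = 0 := by
        have := LinearMap.congr_fun hσ (g b)
        simp only [LinearMap.comp_apply, LinearMap.id_apply] at this
        rw [map_sub, this, sub_self]
      have h2 : q (σ (g b) - b) = 0 := hqker _ (LinearMap.mem_ker.mpr h1)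
      rw [map_sub, sub_eq_zero] at h2
      simpa [hsdef] using h2
    have hqx : ∀ b, q (xB b) = xB (q b) := by
      intro b
      rw [hq_pt, hq_pt, hrr_pt, hfx_pt, ← map_sub]
    have hsx : s ∘ₗ xC = xB ∘ₗ s := by
      apply LinearMap.ext
      intro c
      obtain ⟨b, rfl⟩ := hgsurj c
      simp only [LinearMap.comp_apply]
      rw [← hgx_pt, hsg, hsg, hqx]
    have hgs_pt : ∀ c, g (s c) = c := by
      intro c
      obtain ⟨b, rfl⟩ := hgsurj c
      have hgfr : g (f (rr b)) = 0 := by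
        have := LinearMap.congr_fun hgf (rr b); simpa using this
      rw [hsg, hq_pt, map_sub, hgfr, sub_zero]
    -- commuting proofs
    have hidA : (LinearMap.id : A →ₗ[k] A) ∘ₗ xA = xA ∘ₗ LinearMap.id := by
      rw [LinearMap.id_comp, LinearMap.comp_id]
    have hidB : (LinearMap.id : B →ₗ[k] B) ∘ₗ xB = xB ∘ₗ LinearMap.id := by
      rw [LinearMap.id_comp, LinearMap.comp_id]
    have hidC : (LinearMap.id : C →ₗ[k] C) ∘ₗ xC = xC ∘ₗ LinearMap.id := by
      rw [LinearMap.id_comp, LinearMap.comp_id]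
    refine ⟨?_, ?_, ?_⟩
    · -- injectivity of φ(f)
      have e1 : phiMap xB xA rr hrrx i ∘ₗ phiMap xA xB f hfx i = LinearMap.id := by
        rw [← phiMap_comp hfx hrrx (comm_comp hfx hrrx) i,
          phiMap_congr (comm_comp hfx hrrx) hidA hrrf i, phiMap_id]
      intro y₁ y₂ hy
      have h3 := congrArg (phiMap xB xA rr hrrx i) hy
      rw [← LinearMap.comp_apply, ← LinearMap.comp_apply, e1] at h3
      simpa using h3
    · -- surjectivity of φ(g)
      have hgs : g ∘ₗ s = LinearMap.id := LinearMap.ext hgs_pt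
      have e2 : phiMap xB xC g hgx i ∘ₗ phiMap xC xB s hsx i = LinearMap.id := by
        rw [← phiMap_comp hsx hgx (comm_comp hsx hgx) i,
          phiMap_congr (comm_comp hsx hgx) hidC hgs i, phiMap_id]
      intro y
      refine ⟨phiMap xC xB s hsx i y, ?_⟩
      have := LinearMap.congr_fun e2 y
      exact this
    · -- exactness at the middle
      have hcomm1 : (f ∘ₗ rr) ∘ₗ xB = xB ∘ₗ (f ∘ₗ rr) := comm_comp hrrx hfx
      have hcomm2 : (s ∘ₗ g) ∘ₗ xB = xB ∘ₗ (s ∘ₗ g) := comm_comp hgx hsx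
      apply le_antisymm
      · rintro y ⟨z, rfl⟩
        rw [LinearMap.mem_ker, ← LinearMap.comp_apply,
          ← phiMap_comp hfx hgx (comm_comp hfx hgx) i,
          phiMap_congr (comm_comp hfx hgx) (by rw [LinearMap.zero_comp,
            LinearMap.comp_zero]) hgf i, phiMap_zero]
        rfl
      · intro y hy
        rw [LinearMap.mem_ker] at hy
        have heq : f ∘ₗ rr + s ∘ₗ g = LinearMap.id := by
          apply LinearMap.ext
          intro b
          simp only [LinearMap.add_apply, LinearMap.comp_apply, LinearMap.id_apply]
          rw [hsg, hq_pt]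
          abel
        have hcommsum : (f ∘ₗ rr + s ∘ₗ g) ∘ₗ xB = xB ∘ₗ (f ∘ₗ rr + s ∘ₗ g) := by
          rw [LinearMap.add_comp, LinearMap.comp_add, hcomm1, hcomm2]
        have e3 : phiMap xB xB (f ∘ₗ rr) hcomm1 i + phiMap xB xB (s ∘ₗ g) hcomm2 i =
            LinearMap.id := by
          rw [← phiMap_add hcomm1 hcomm2 hcommsum i,
            phiMap_congr hcommsum hidB heq i, phiMap_id]
        have hysplit : y = phiMap xB xB (f ∘ₗ rr) hcomm1 i y +
            phiMap xB xB (s ∘ₗ g) hcomm2 i y := by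
          have := LinearMap.congr_fun e3 y
          simpa using this.symm
        rw [hysplit]
        have h2 : phiMap xB xB (s ∘ₗ g) hcomm2 i y = 0 := by
          rw [phiMap_comp hgx hsx hcomm2 i, LinearMap.comp_apply, hy, map_zero]
        rw [h2, add_zero, phiMap_comp hrrx hfx hcomm1 i]
        exact ⟨phiMap xB xA rr hrrx i y, rfl⟩
  tfae_finish
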